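/- arXiv:2403.04740 — 6 statements merged into one kernel-verified Lean document; each statement's English description precedes it below -/
import Mathlib

section
/- Let N ∈ ℕ and X₁, X₂ ⊆ Fin N be nonempty. Then the second moment of the number of X-pairs of a uniformly random permutation π ∈ S_N satisfies |X₁||X₂|/N ≤ E[|X_π|²] ≤ |X₁||X₂|/N + |X₁|²|X₂|²/N². -/
open Finset
lemma L1 (N : ℕ) (i k : Fin N) :
    (univ.filter fun π : Equiv.Perm (Fin N) => π i = k).card = (N-1).factorial := by
  have hN : 0 < N := i.pos
  have key : ∀ k k' : Fin N,
      (univ.filter fun π : Equiv.Perm (Fin N) => π i = k).card =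
      (univ.filter fun π : Equiv.Perm (Fin N) => π i = k').card := by
    intro k k'
    apply Finset.card_bij' (fun π _ => Equiv.swap k k' * π) (fun π _ => Equiv.swap k k' * π)
    · intro π hπ
      simp only [mem_filter, mem_univ, true_and] at hπ ⊢
      simp [Equiv.Perm.mul_apply, hπ]
    · intro π hπ
      simp only [mem_filter, mem_univ, true_and] at hπ ⊢
      simp [Equiv.Perm.mul_apply, hπ, Equiv.swap_apply_right]
    · intro π _; simp [← mul_assoc]
    · intro π _; simp [← mul_assoc]
  have hsum : ∑ k' : Fin N, (univ.filter fun π : Equiv.Perm (Fin N) => π i = k').card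
      = N.factorial := by
    rw [← Finset.card_eq_sum_card_fiberwise (fun π _ => mem_univ (π i))]
    simp [Fintype.card_perm]
  have hconst : ∑ k' : Fin N, (univ.filter fun π : Equiv.Perm (Fin N) => π i = k').card
      = N * (univ.filter fun π : Equiv.Perm (Fin N) => π i = k).card := by
    rw [Finset.sum_congr rfl fun k' _ => (key k' k)]
    simp [mul_comm]
  have h2 := hconst.symm.trans hsum
  have hfac : N * (N-1).factorial = N.factorial := Nat.mul_factorial_pred hN.ne'
  exact Nat.eq_of_mul_eq_mul_left hN (h2.trans hfac.symm)

lemma L2 (N : ℕ) (i j k l : Fin N) (hij : i ≠ j) (hkl : k ≠ l) :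
    (univ.filter fun π : Equiv.Perm (Fin N) => π i = k ∧ π j = l).card = (N-2).factorial := by
  have hN2 : 2 ≤ N := by
    have : Nontrivial (Fin N) := ⟨i, j, hij⟩
    exact (by simpa using Fintype.one_lt_card (α := Fin N) : 1 < N)
  have key : ∀ l l' : Fin N, l ≠ k → l' ≠ k →
      (univ.filter fun π : Equiv.Perm (Fin N) => π i = k ∧ π j = l).card =
      (univ.filter fun π : Equiv.Perm (Fin N) => π i = k ∧ π j = l').card := by
    intro l l' hl hl'
    apply Finset.card_bij' (fun π _ => Equiv.swap l l' * π) (fun π _ => Equiv.swap l l' * π)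
    · intro π hπ
      simp only [mem_filter, mem_univ, true_and] at hπ ⊢
      simp [Equiv.Perm.mul_apply, hπ.1, hπ.2, Equiv.swap_apply_of_ne_of_ne (Ne.symm hl) (Ne.symm hl')]
    · intro π hπ
      simp only [mem_filter, mem_univ, true_and] at hπ ⊢
      simp [Equiv.Perm.mul_apply, hπ.1, hπ.2, Equiv.swap_apply_right,
        Equiv.swap_apply_of_ne_of_ne (Ne.symm hl) (Ne.symm hl')]
    · intro π _; simp [← mul_assoc]
    · intro π _; simp [← mul_assoc]
  have hsum : ∑ l' ∈ univ.erase k,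
      ((univ.filter fun π : Equiv.Perm (Fin N) => π i = k).filter
        (fun π => π j = l')).card
      = (N-1).factorial := by
    rw [← Finset.card_eq_sum_card_fiberwise (f := fun π : Equiv.Perm (Fin N) => π j)]
    · exact L1 N i k
    · intro π hπ
      simp only [mem_coe, mem_filter, mem_univ, true_and] at hπ
      simp only [mem_coe, mem_erase, mem_univ, and_true]
      intro h
      exact hij (π.injective (hπ.trans h.symm))
  have hre : ∀ l' ∈ univ.erase k,
      ((univ.filter fun π : Equiv.Perm (Fin N) => π i = k).filter (fun π => π j = l')).card
      = (univ.filter fun π : Equiv.Perm (Fin N) => π i = k ∧ π j = l).card := by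
    intro l' hl'
    rw [Finset.filter_filter]
    exact key l' l (mem_erase.mp hl').1 (fun h => hkl h.symm)
  rw [Finset.sum_congr rfl hre, Finset.sum_const, card_erase_of_mem (mem_univ k)] at hsum
  simp only [card_univ, Fintype.card_fin, smul_eq_mul] at hsum
  have h1N : 0 < N - 1 := by omega
  have hfac : (N-1) * (N-2).factorial = (N-1).factorial := by
    have := Nat.mul_factorial_pred h1N.ne'
    simpa [Nat.sub_sub] using this
  exact Nat.eq_of_mul_eq_mul_left h1N (hsum.trans hfac.symm)

lemma C1 (N : ℕ) (i : Fin N) (X₂ : Finset (Fin N)) :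
    (univ.filter fun π : Equiv.Perm (Fin N) => π i ∈ X₂).card
      = X₂.card * (N-1).factorial := by
  rw [Finset.card_eq_sum_card_fiberwise (f := fun π : Equiv.Perm (Fin N) => π i)
    (s := univ.filter fun π : Equiv.Perm (Fin N) => π i ∈ X₂)
    (t := X₂) (fun π hπ => (mem_filter.mp (mem_coe.mp hπ)).2)]
  have : ∀ k ∈ X₂,
      ((univ.filter fun π : Equiv.Perm (Fin N) => π i ∈ X₂).filter (fun π => π i = k)).card
      = (N-1).factorial := by
    intro k hk
    rw [Finset.filter_filter]
    rw [Finset.filter_congr (q := fun π : Equiv.Perm (Fin N) => π i = k)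
      (fun π _ => ⟨fun h => h.2, fun h => ⟨h ▸ hk, h⟩⟩)]
    exact L1 N i k
  rw [Finset.sum_congr rfl this, Finset.sum_const, smul_eq_mul]

lemma C2 (N : ℕ) (i j : Fin N) (hij : i ≠ j) (X₂ : Finset (Fin N)) :
    (univ.filter fun π : Equiv.Perm (Fin N) => π i ∈ X₂ ∧ π j ∈ X₂).card
      = X₂.card * (X₂.card - 1) * (N-2).factorial := by
  rw [Finset.card_eq_sum_card_fiberwise (f := fun π : Equiv.Perm (Fin N) => (π i, π j))
    (s := univ.filter fun π : Equiv.Perm (Fin N) => π i ∈ X₂ ∧ π j ∈ X₂)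
    (t := X₂ ×ˢ X₂) (fun π hπ => by
      simp only [mem_coe, mem_filter, mem_univ, true_and] at hπ
      exact Finset.mem_product.mpr hπ)]
  have hre : ∀ p ∈ X₂ ×ˢ X₂,
      ((univ.filter fun π : Equiv.Perm (Fin N) => π i ∈ X₂ ∧ π j ∈ X₂).filter
        (fun π => (π i, π j) = p)).card
      = if p.1 = p.2 then 0 else (N-2).factorial := by
    rintro ⟨k, l⟩ hp
    obtain ⟨hk, hl⟩ := Finset.mem_product.mp hp
    rw [Finset.filter_filter]
    by_cases hkl : k = l
    · rw [if_pos hkl, Finset.card_eq_zero, Finset.filter_eq_empty_iff]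
      rintro π - ⟨-, h⟩
      rw [Prod.mk.injEq] at h
      exact hij (π.injective (h.1.trans (hkl.trans h.2.symm)))

    · rw [if_neg hkl]
      rw [Finset.filter_congr (q := fun π : Equiv.Perm (Fin N) => π i = k ∧ π j = l)
        (fun π _ => by
          simp only [Prod.mk.injEq]
          exact ⟨fun h => h.2, fun ⟨h1, h2⟩ => ⟨⟨h1 ▸ hk, h2 ▸ hl⟩, h1, h2⟩⟩)]
      exact L2 N i j k l hij hkl
  rw [Finset.sum_congr rfl hre]
  rw [Finset.sum_product]
  have : ∀ k ∈ X₂, ∑ l ∈ X₂, (if k = l then 0 else (N-2).factorial)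
      = (X₂.card - 1) * (N-2).factorial := by
    intro k hk
    rw [← Finset.add_sum_erase _ _ hk, if_pos rfl, zero_add]
    rw [Finset.sum_congr rfl (fun l hl => if_neg (fun h => (mem_erase.mp hl).1 h.symm))]
    rw [Finset.sum_const, smul_eq_mul, card_erase_of_mem hk]
  rw [Finset.sum_congr rfl this, Finset.sum_const, smul_eq_mul, ← mul_assoc]

lemma MAIN (N : ℕ) (X₁ X₂ : Finset (Fin N)) :
    ∑ π : Equiv.Perm (Fin N), ((X₁.filter (fun i => π i ∈ X₂)).card) ^ 2
      = X₁.card * (X₂.card * (N-1).factorial)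
        + X₁.card * ((X₁.card - 1) * (X₂.card * (X₂.card - 1) * (N-2).factorial)) := by
  have step1 : ∀ π : Equiv.Perm (Fin N), ((X₁.filter (fun i => π i ∈ X₂)).card) ^ 2
      = ∑ i ∈ X₁, ∑ j ∈ X₁,
          (if π i ∈ X₂ then 1 else 0) * (if π j ∈ X₂ then 1 else 0) := by
    intro π
    rw [Finset.card_filter, sq, Finset.sum_mul_sum]
  rw [Finset.sum_congr rfl fun π _ => step1 π]
  rw [Finset.sum_comm]
  rw [Finset.sum_congr rfl fun i _ => Finset.sum_comm]
  have step2 : ∀ i ∈ X₁, ∑ j ∈ X₁, ∑ π : Equiv.Perm (Fin N),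
      (if π i ∈ X₂ then 1 else 0) * (if π j ∈ X₂ then 1 else 0)
      = X₂.card * (N-1).factorial
        + (X₁.card - 1) * (X₂.card * (X₂.card - 1) * (N-2).factorial) := by
    intro i hi
    have inner : ∀ j, ∑ π : Equiv.Perm (Fin N),
        (if π i ∈ X₂ then 1 else 0) * (if π j ∈ X₂ then 1 else 0)
        = (univ.filter fun π : Equiv.Perm (Fin N) => π i ∈ X₂ ∧ π j ∈ X₂).card := by
      intro j
      rw [Finset.card_filter]
      apply Finset.sum_congr rfl
      intro π _
      by_cases h1 : π i ∈ X₂ <;> by_cases h2 : π j ∈ X₂ <;> simp [h1, h2]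
    have vals : ∀ j ∈ X₁, ∑ π : Equiv.Perm (Fin N),
        (if π i ∈ X₂ then 1 else 0) * (if π j ∈ X₂ then 1 else 0)
        = if i = j then X₂.card * (N-1).factorial
          else X₂.card * (X₂.card - 1) * (N-2).factorial := by
      intro j _
      rw [inner j]
      by_cases hij : i = j
      · rw [if_pos hij, ← hij]
        rw [Finset.filter_congr (q := fun π : Equiv.Perm (Fin N) => π i ∈ X₂)
          (fun π _ => and_self_iff)]
        exact C1 N i X₂
      · rw [if_neg hij]
        exact C2 N i j hij X₂
    rw [Finset.sum_congr rfl vals]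
    rw [← Finset.add_sum_erase _ _ hi, if_pos rfl]
    rw [Finset.sum_congr rfl (fun j hj => if_neg (fun h => (mem_erase.mp hj).1 h.symm))]
    rw [Finset.sum_const, smul_eq_mul, card_erase_of_mem hi]
  rw [Finset.sum_congr rfl step2, Finset.sum_const, smul_eq_mul, mul_add]

theorem stmt_3 (N : ℕ) (X₁ X₂ : Finset (Fin N)) (h₁ : X₁.Nonempty) (h₂ : X₂.Nonempty) :
    (X₁.card : ℝ) * X₂.card / N ≤
      (∑ π : Equiv.Perm (Fin N),
        ((X₁.filter (fun i => π i ∈ X₂)).card : ℝ) ^ 2) / Nat.factorial N ∧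
    (∑ π : Equiv.Perm (Fin N),
        ((X₁.filter (fun i => π i ∈ X₂)).card : ℝ) ^ 2) / Nat.factorial N ≤
      (X₁.card : ℝ) * X₂.card / N + (X₁.card : ℝ) ^ 2 * (X₂.card : ℝ) ^ 2 / (N : ℝ) ^ 2 := by
  have hN : 0 < N := h₁.choose.pos
  have ha : 1 ≤ X₁.card := Finset.card_pos.mpr h₁
  have hb : 1 ≤ X₂.card := h₂.card_pos
  have haN : X₁.card ≤ N := by simpa using Finset.card_le_univ X₁
  have hbN : X₂.card ≤ N := by simpa using Finset.card_le_univ X₂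
  set A : ℝ := (X₁.card : ℝ) with hA
  set B : ℝ := (X₂.card : ℝ) with hB
  have hA1 : (1:ℝ) ≤ A := by rw [hA]; exact_mod_cast ha
  have hB1 : (1:ℝ) ≤ B := by rw [hB]; exact_mod_cast hb
  have hAn : A ≤ (N:ℝ) := by rw [hA]; exact_mod_cast haN
  have hBn : B ≤ (N:ℝ) := by rw [hB]; exact_mod_cast hbN
  have hn : (0:ℝ) < N := by exact_mod_cast hN
  have hF2 : (0:ℝ) < ((N-2).factorial : ℝ) := by exact_mod_cast (N-2).factorial_pos
  have hF1 : (0:ℝ) < ((N-1).factorial : ℝ) := by exact_mod_cast (N-1).factorial_pos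
  have hFN : (0:ℝ) < (N.factorial : ℝ) := by exact_mod_cast N.factorial_pos
  have hsumR : (∑ π : Equiv.Perm (Fin N),
        ((X₁.filter (fun i => π i ∈ X₂)).card : ℝ) ^ 2)
      = A * B * ((N-1).factorial : ℝ)
        + A * (A-1) * (B * (B-1) * ((N-2).factorial : ℝ)) := by
    have h := MAIN N X₁ X₂
    calc (∑ π : Equiv.Perm (Fin N), ((X₁.filter (fun i => π i ∈ X₂)).card : ℝ) ^ 2)
        = ((∑ π : Equiv.Perm (Fin N), ((X₁.filter (fun i => π i ∈ X₂)).card) ^ 2 : ℕ) : ℝ) := by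
          push_cast; rfl
      _ = _ := by rw [h]; push_cast [Nat.cast_sub ha, Nat.cast_sub hb]; ring
  have e1 : (N.factorial : ℝ) = N * ((N-1).factorial : ℝ) := by
    exact_mod_cast (Nat.mul_factorial_pred hN.ne').symm
  by_cases hN2 : 2 ≤ N
  · have e2 : ((N-1).factorial : ℝ) = ((N:ℝ) - 1) * ((N-2).factorial : ℝ) := by
      have h := Nat.mul_factorial_pred (show N - 1 ≠ 0 by omega)
      have h2 : (N - 1 - 1) = N - 2 := by omega
      rw [h2] at h
      calc ((N-1).factorial : ℝ) = (((N-1) * (N-2).factorial : ℕ) : ℝ) := by rw [h]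
        _ = ((N:ℝ) - 1) * ((N-2).factorial : ℝ) := by
            push_cast [Nat.cast_sub (by omega : 1 ≤ N)]; ring
    have hX : (0:ℝ) ≤ A * (A-1) * (B * (B-1) * ((N-2).factorial : ℝ)) := by
      have := sub_nonneg.2 hA1
      have := sub_nonneg.2 hB1
      positivity
    constructor
    · rw [hsumR, div_le_div_iff₀ hn hFN, e1]
      nlinarith [mul_nonneg hX hn.le]
    · have hRHS : A * B / N + A ^ 2 * B ^ 2 / (N:ℝ) ^ 2
          = (A * B * N + A ^ 2 * B ^ 2) / (N:ℝ) ^ 2 := by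
        field_simp
      rw [hsumR, hRHS, div_le_div_iff₀ hFN (by positivity), e1, e2]
      have K : (N:ℝ) * (A * (A-1) * (B * (B-1))) ≤ ((N:ℝ) - 1) * (A ^ 2 * B ^ 2) := by
        nlinarith [mul_nonneg (mul_nonneg (by linarith : (0:ℝ) ≤ A) (by linarith : (0:ℝ) ≤ B))
            (mul_nonneg hn.le (sub_nonneg.2 hA1)),
          mul_nonneg (mul_nonneg (by linarith : (0:ℝ) ≤ A) (by linarith : (0:ℝ) ≤ B))
            (mul_nonneg (by linarith : (0:ℝ) ≤ B) (sub_nonneg.2 hAn))]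
      nlinarith [mul_le_mul_of_nonneg_left K (by positivity : (0:ℝ) ≤ (N:ℝ) * ((N-2).factorial : ℝ))]
  · have hN1 : N = 1 := by omega
    subst hN1
    have ha1 : X₁.card = 1 := le_antisymm haN ha
    have hb1 : X₂.card = 1 := le_antisymm hbN hb
    rw [hsumR]
    rw [hA, hB, ha1, hb1]
    norm_num
end

section
/- The sequence a_N = C(N-√N, √N)/C(N, √N), where √N = 2^n and N = 2^{2n}, is monotonically increasing in n and converges to 1/e as n → ∞. -/
open Finset Filter

private lemma prod_pairing (f : ℕ → ℕ) (m : ℕ) :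
    ∏ k ∈ range (2 * m), f k = ∏ j ∈ range m, (f (2 * j) * f (2 * j + 1)) := by
  induction m with
  | zero => simp
  | succ m ih =>
    have h2 : 2 * (m + 1) = (2 * m + 1) + 1 := by ring
    rw [h2, Finset.prod_range_succ, Finset.prod_range_succ, ih, Finset.prod_range_succ]
    ring

set_option maxHeartbeats 2000000 in
private lemma key_nat (m : ℕ) :
    Nat.choose (m ^ 2 - m) m * Nat.choose (4 * m ^ 2) (2 * m) ≤
      Nat.choose (m ^ 2) m * Nat.choose (4 * m ^ 2 - 2 * m) (2 * m) := by
  have hd : (m ^ 2 - m).descFactorial m * (4 * m ^ 2).descFactorial (2 * m) ≤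
      (m ^ 2).descFactorial m * (4 * m ^ 2 - 2 * m).descFactorial (2 * m) := by
    rw [Nat.descFactorial_eq_prod_range, Nat.descFactorial_eq_prod_range,
      Nat.descFactorial_eq_prod_range, Nat.descFactorial_eq_prod_range,
      prod_pairing (fun k => 4 * m ^ 2 - k) m,
      prod_pairing (fun k => 4 * m ^ 2 - 2 * m - k) m,
      ← Finset.prod_mul_distrib, ← Finset.prod_mul_distrib]
    apply Finset.prod_le_prod (fun _ _ => Nat.zero_le _)
    intro j hj
    simp only [mem_range] at hj
    have hm1 : 1 ≤ m := by omega
    have hsq : m ^ 2 = m * m := sq m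
    have h1 : m ^ 2 - m - j = m ^ 2 - (m + j) := by omega
    have ha : 4 * m ^ 2 - 2 * m - 2 * j = 4 * m ^ 2 - (2 * m + 2 * j) := by omega
    have hb : 4 * m ^ 2 - 2 * m - (2 * j + 1) = 4 * m ^ 2 - (2 * m + 2 * j + 1) := by omega
    have hmj : m + j ≤ m ^ 2 := by nlinarith [hsq]
    have hj0 : j ≤ m ^ 2 := by nlinarith [hsq]
    have hj1 : 2 * j ≤ 4 * m ^ 2 := by nlinarith [hsq]
    have hj2 : 2 * j + 1 ≤ 4 * m ^ 2 := by nlinarith [hsq]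
    have hj4 : 2 * m + 2 * j + 1 ≤ 4 * m ^ 2 := by nlinarith [hsq]
    have hj5 : 2 * m + 2 * j ≤ 4 * m ^ 2 := by nlinarith [hsq]
    rw [h1, ha, hb]
    zify [hmj, hj0, hj1, hj2, hj4, hj5]
    clear h1 ha hb hmj hj0 hj1 hj2 hj4 hj5
    have hjz : (0 : ℤ) ≤ (j : ℤ) := Int.ofNat_nonneg j
    have hjm : (j : ℤ) ≤ (m : ℤ) - 1 := by omega
    have hmz : (1 : ℤ) ≤ (m : ℤ) := by omega
    clear hj hm1
    have hq : (0:ℤ) ≤ 2 * (m:ℤ) ^ 2 - m - j := by nlinarith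
    have c1 : (0:ℤ) ≤ (m:ℤ) * ((j:ℤ) * (2 * (m:ℤ) ^ 2 - m - j)) :=
      mul_nonneg (by omega) (mul_nonneg hjz hq)
    have c2 : (0:ℤ) ≤ (m:ℤ) ^ 3 * (2 * (m:ℤ) - 1) := by nlinarith
    nlinarith [c1, c2]
  rw [Nat.descFactorial_eq_factorial_mul_choose, Nat.descFactorial_eq_factorial_mul_choose,
    Nat.descFactorial_eq_factorial_mul_choose, Nat.descFactorial_eq_factorial_mul_choose] at hd
  have hpos : 0 < Nat.factorial m * Nat.factorial (2 * m) :=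
    Nat.mul_pos (Nat.factorial_pos m) (Nat.factorial_pos (2 * m))
  refine Nat.le_of_mul_le_mul_left ?_ hpos
  calc Nat.factorial m * Nat.factorial (2 * m) *
        (Nat.choose (m ^ 2 - m) m * Nat.choose (4 * m ^ 2) (2 * m))
      = Nat.factorial m * Nat.choose (m ^ 2 - m) m *
        (Nat.factorial (2 * m) * Nat.choose (4 * m ^ 2) (2 * m)) := by ring
    _ ≤ Nat.factorial m * Nat.choose (m ^ 2) m *
        (Nat.factorial (2 * m) * Nat.choose (4 * m ^ 2 - 2 * m) (2 * m)) := hd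
    _ = Nat.factorial m * Nat.factorial (2 * m) *
        (Nat.choose (m ^ 2) m * Nat.choose (4 * m ^ 2 - 2 * m) (2 * m)) := by ring

private lemma ratio_eq (m : ℕ) :
    ((m ^ 2 - m).choose m : ℝ) / ((m ^ 2).choose m : ℝ) =
      ∏ k ∈ range m, (((m ^ 2 - m - k : ℕ) : ℝ) / ((m ^ 2 - k : ℕ) : ℝ)) := by
  have hf : (Nat.factorial m : ℝ) ≠ 0 := by exact_mod_cast Nat.factorial_ne_zero m
  rw [Finset.prod_div_distrib, ← Nat.cast_prod, ← Nat.cast_prod,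
    ← Nat.descFactorial_eq_prod_range, ← Nat.descFactorial_eq_prod_range,
    Nat.descFactorial_eq_factorial_mul_choose, Nat.descFactorial_eq_factorial_mul_choose]
  push_cast
  rw [mul_div_mul_left _ _ hf]

private lemma ratio_le (m : ℕ) (hm : 2 ≤ m) :
    ((m ^ 2 - m).choose m : ℝ) / ((m ^ 2).choose m : ℝ) ≤ (((m : ℝ) - 1) / m) ^ m := by
  rw [ratio_eq]
  have hc : (((m : ℝ) - 1) / m) ^ m = ∏ k ∈ range m, ((m : ℝ) - 1) / m := by
    rw [Finset.prod_const, card_range]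
  rw [hc]
  apply Finset.prod_le_prod
  · intro k _; positivity
  · intro k hk
    simp only [mem_range] at hk
    have hmr : (2 : ℝ) ≤ (m : ℝ) := by exact_mod_cast hm
    have hkr : (k : ℝ) < (m : ℝ) := by exact_mod_cast hk
    have hmj : m + k ≤ m ^ 2 := by nlinarith
    have hk2 : k ≤ m ^ 2 := by nlinarith
    have e1 : ((m ^ 2 - m - k : ℕ) : ℝ) = (m : ℝ) ^ 2 - m - k := by
      have h : m ^ 2 - m - k = m ^ 2 - (m + k) := by omega
      rw [h, Nat.cast_sub hmj]; push_cast; ring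
    have e2 : ((m ^ 2 - k : ℕ) : ℝ) = (m : ℝ) ^ 2 - k := by
      rw [Nat.cast_sub hk2]; push_cast; ring
    rw [e1, e2, div_le_div_iff₀ (by nlinarith) (by nlinarith)]
    nlinarith

private lemma ratio_ge (m : ℕ) (hm : 2 ≤ m) :
    (((m : ℝ) - 2) / ((m : ℝ) - 1)) ^ m ≤
      ((m ^ 2 - m).choose m : ℝ) / ((m ^ 2).choose m : ℝ) := by
  rw [ratio_eq]
  have hc : (((m : ℝ) - 2) / ((m : ℝ) - 1)) ^ m = ∏ k ∈ range m, ((m : ℝ) - 2) / ((m : ℝ) - 1) := by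
    rw [Finset.prod_const, card_range]
  rw [hc]
  apply Finset.prod_le_prod
  · intro k _
    have hmr : (2 : ℝ) ≤ (m : ℝ) := by exact_mod_cast hm
    have : (0:ℝ) ≤ (m : ℝ) - 2 := by linarith
    have : (0:ℝ) < (m : ℝ) - 1 := by linarith
    positivity
  · intro k hk
    simp only [mem_range] at hk
    have hmr : (2 : ℝ) ≤ (m : ℝ) := by exact_mod_cast hm
    have hkr : (k : ℝ) < (m : ℝ) := by exact_mod_cast hk
    have hkr0 : (0 : ℝ) ≤ (k : ℝ) := Nat.cast_nonneg k
    have hmj : m + k ≤ m ^ 2 := by nlinarith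
    have hk2 : k ≤ m ^ 2 := by nlinarith
    have e1 : ((m ^ 2 - m - k : ℕ) : ℝ) = (m : ℝ) ^ 2 - m - k := by
      have h : m ^ 2 - m - k = m ^ 2 - (m + k) := by omega
      rw [h, Nat.cast_sub hmj]; push_cast; ring
    have e2 : ((m ^ 2 - k : ℕ) : ℝ) = (m : ℝ) ^ 2 - k := by
      rw [Nat.cast_sub hk2]; push_cast; ring
    rw [e1, e2, div_le_div_iff₀ (by nlinarith) (by nlinarith)]
    nlinarith

theorem stmt_7 :
    Monotone (fun n : ℕ =>
      (Nat.choose (2 ^ (2 * n) - 2 ^ n) (2 ^ n) : ℝ) / Nat.choose (2 ^ (2 * n)) (2 ^ n)) ∧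
    Filter.Tendsto (fun n : ℕ =>
      (Nat.choose (2 ^ (2 * n) - 2 ^ n) (2 ^ n) : ℝ) / Nat.choose (2 ^ (2 * n)) (2 ^ n))
      Filter.atTop (nhds (Real.exp (-1))) := by
  have hNm : ∀ n : ℕ, 2 ^ (2 * n) = (2 ^ n) ^ 2 := by
    intro n; rw [mul_comm, pow_mul]
  constructor
  · apply monotone_nat_of_le_succ
    intro n
    show (Nat.choose (2 ^ (2 * n) - 2 ^ n) (2 ^ n) : ℝ) / Nat.choose (2 ^ (2 * n)) (2 ^ n) ≤
      (Nat.choose (2 ^ (2 * (n + 1)) - 2 ^ (n + 1)) (2 ^ (n + 1)) : ℝ) /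
        Nat.choose (2 ^ (2 * (n + 1))) (2 ^ (n + 1))
    set m := 2 ^ n with hm
    have hm1 : 1 ≤ m := Nat.one_le_two_pow
    have h1 : 2 ^ (2 * n) = m ^ 2 := hNm n
    have h2 : 2 ^ (2 * (n + 1)) = 4 * m ^ 2 := by
      rw [hNm (n + 1), pow_succ, hm]; ring
    have h3 : 2 ^ (n + 1) = 2 * m := by rw [pow_succ, hm]; ring
    rw [h1, h2, h3]
    have hd1 : 0 < ((m ^ 2).choose m : ℝ) := by
      exact_mod_cast Nat.choose_pos (by nlinarith : m ≤ m ^ 2)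
    have hd2 : 0 < ((4 * m ^ 2).choose (2 * m) : ℝ) := by
      exact_mod_cast Nat.choose_pos (by nlinarith : 2 * m ≤ 4 * m ^ 2)
    rw [div_le_div_iff₀ hd1 hd2]
    have hkey : ((m ^ 2 - m).choose m * (4 * m ^ 2).choose (2 * m) : ℝ) ≤
        ((m ^ 2).choose m * (4 * m ^ 2 - 2 * m).choose (2 * m) : ℝ) := by
      exact_mod_cast key_nat m
    calc ((m ^ 2 - m).choose m : ℝ) * (4 * m ^ 2).choose (2 * m) ≤
        ((m ^ 2).choose m * (4 * m ^ 2 - 2 * m).choose (2 * m) : ℝ) := hkey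
      _ = ((4 * m ^ 2 - 2 * m).choose (2 * m) : ℝ) * (m ^ 2).choose m := by ring
  · -- convergence
    have hpow : Tendsto (fun n : ℕ => 2 ^ n) atTop atTop :=
      tendsto_pow_atTop_atTop_of_one_lt one_lt_two
    have hub : Tendsto (fun n : ℕ => (((2:ℝ) ^ n - 1) / (2:ℝ) ^ n) ^ (2 ^ n : ℕ))
        atTop (nhds (Real.exp (-1))) := by
      have h := (Real.tendsto_one_add_div_pow_exp (-1)).comp hpow
      refine h.congr fun n => ?_
      have h2 : (0:ℝ) < (2:ℝ) ^ n := by positivity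
      have : ((2 ^ n : ℕ) : ℝ) = (2:ℝ) ^ n := by push_cast; ring
      simp only [Function.comp_apply, this]
      congr 1
      field_simp
      ring
    have hsub : Tendsto (fun n : ℕ => 2 ^ n - 1) atTop atTop :=
      (tendsto_sub_atTop_nat 1).comp hpow
    have hlb : Tendsto (fun n : ℕ => (((2:ℝ) ^ n - 2) / ((2:ℝ) ^ n - 1)) ^ (2 ^ n : ℕ))
        atTop (nhds (Real.exp (-1))) := by
      have hg : Tendsto (fun k : ℕ => (1 + (-1:ℝ) / k) ^ k * (1 + (-1:ℝ) / k))
          atTop (nhds (Real.exp (-1) * 1)) := by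
        apply (Real.tendsto_one_add_div_pow_exp (-1)).mul
        have : Tendsto (fun k : ℕ => (-1:ℝ) / k) atTop (nhds 0) :=
          tendsto_const_div_atTop_nhds_zero_nat (-1)
        have h1 : Filter.Tendsto (fun k : ℕ => 1 + (-1:ℝ) / k) atTop (nhds (1 + 0)) :=
          this.const_add 1
        simpa using h1
      rw [mul_one] at hg
      have h := hg.comp hsub
      refine h.congr' ?_
      filter_upwards [eventually_ge_atTop 1] with n hn
      have hk1 : 1 ≤ 2 ^ n - 1 := by
        have : 2 ≤ 2 ^ n := by
          calc 2 = 2 ^ 1 := (pow_one 2).symm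
          _ ≤ 2 ^ n := Nat.pow_le_pow_right (by norm_num) hn
        omega
      have hkc : ((2 ^ n - 1 : ℕ) : ℝ) = (2:ℝ) ^ n - 1 := by
        rw [Nat.cast_sub Nat.one_le_two_pow]; push_cast; ring
      have hkpos : (0:ℝ) < (2:ℝ) ^ n - 1 := by
        rw [← hkc]; exact_mod_cast hk1
      have hfrac : 1 + (-1:ℝ) / ((2 ^ n - 1 : ℕ) : ℝ) = ((2:ℝ) ^ n - 2) / ((2:ℝ) ^ n - 1) := by
        rw [hkc]; field_simp; ring
      simp only [Function.comp_apply, hfrac]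
      rw [← pow_succ]
      congr 1
      omega
    apply tendsto_of_tendsto_of_tendsto_of_le_of_le' hlb hub
    · filter_upwards [eventually_ge_atTop 1] with n hn
      have hm2 : 2 ≤ 2 ^ n := by
        calc 2 = 2 ^ 1 := (pow_one 2).symm
        _ ≤ 2 ^ n := Nat.pow_le_pow_right (by norm_num) hn
      show (((2:ℝ) ^ n - 2) / ((2:ℝ) ^ n - 1)) ^ (2 ^ n : ℕ) ≤
        (Nat.choose (2 ^ (2 * n) - 2 ^ n) (2 ^ n) : ℝ) / Nat.choose (2 ^ (2 * n)) (2 ^ n)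
      rw [hNm n]
      have := ratio_ge (2 ^ n) hm2
      push_cast at this ⊢
      exact this
    · filter_upwards [eventually_ge_atTop 1] with n hn
      have hm2 : 2 ≤ 2 ^ n := by
        calc 2 = 2 ^ 1 := (pow_one 2).symm
        _ ≤ 2 ^ n := Nat.pow_le_pow_right (by norm_num) hn
      show (Nat.choose (2 ^ (2 * n) - 2 ^ n) (2 ^ n) : ℝ) / Nat.choose (2 ^ (2 * n)) (2 ^ n) ≤
        (((2:ℝ) ^ n - 1) / (2:ℝ) ^ n) ^ (2 ^ n : ℕ)
      rw [hNm n]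
      have := ratio_le (2 ^ n) hm2
      push_cast at this ⊢
      exact this
end

section
/- Let N ∈ ℕ, X₁, X₂ ⊆ Fin N, and G₁ = {π ∈ S_N : π(X₁) = X₁}, G₂ = {π ∈ S_N : π(X₂) = X₂}. Two permutations π, π' ∈ S_N lie in the same (G₁, G₂)-double coset G₁πG₂ if and only if they have the same number of X-pairs, i.e., |{i ∈ X₁ : π(i) ∈ X₂}| = |{i ∈ X₁ : π'(i) ∈ X₂}|. -/
open Finset

theorem stmt9_exists_perm_comp {α β : Type*} [Fintype α] [DecidableEq α] [DecidableEq β]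
    (f g : α → β)
    (h : ∀ b, (Finset.univ.filter fun x => f x = b).card
            = (Finset.univ.filter fun x => g x = b).card) :
    ∃ σ : Equiv.Perm α, ∀ x, f (σ x) = g x := by
  have hcard : ∀ b, Fintype.card {x // g x = b} = Fintype.card {x // f x = b} := by
    intro b
    simp [Fintype.card_subtype, h b]
  let e : ∀ b, {x // g x = b} ≃ {x // f x = b} := fun b => Fintype.equivOfCardEq (hcard b)
  refine ⟨(Equiv.sigmaFiberEquiv g).symm.trans
      ((Equiv.sigmaCongrRight e).trans (Equiv.sigmaFiberEquiv f)), fun x => ?_⟩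
  simp only [Equiv.trans_apply]
  have h1 : (Equiv.sigmaFiberEquiv g).symm x = ⟨g x, x, rfl⟩ := rfl
  rw [h1]
  have h2 : (Equiv.sigmaCongrRight e) ⟨g x, x, rfl⟩ = ⟨g x, e (g x) ⟨x, rfl⟩⟩ := rfl
  rw [h2]
  exact (e (g x) ⟨x, rfl⟩).2

theorem stmt9_mem_iff {α : Type*} [DecidableEq α] (e : Equiv.Perm α) (s : Finset α)
    (h : s.image e = s) (x : α) : e x ∈ s ↔ x ∈ s := by
  constructor
  · intro hx
    rw [← h] at hx
    obtain ⟨y, hy, hxy⟩ := Finset.mem_image.1 hx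
    rwa [← e.injective hxy]
  · intro hx
    rw [← h]
    exact Finset.mem_image_of_mem _ hx

theorem stmt9_image_eq {α : Type*} [DecidableEq α] (e : Equiv.Perm α) (s : Finset α)
    (h : ∀ x, e x ∈ s ↔ x ∈ s) : s.image e = s := by
  ext y
  simp only [Finset.mem_image]
  constructor
  · rintro ⟨x, hx, rfl⟩
    exact (h x).2 hx
  · intro hy
    exact ⟨e.symm y, (h _).1 (by simpa using hy), by simp⟩

theorem stmt9_card_preimage {N : ℕ} (X₂ : Finset (Fin N)) (τ : Equiv.Perm (Fin N)) :
    (Finset.univ.filter fun x => τ x ∈ X₂).card = X₂.card := by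
  have himg : (Finset.univ.filter fun x => τ x ∈ X₂).image τ = X₂ := by
    ext y
    simp only [Finset.mem_image, Finset.mem_filter, Finset.mem_univ, true_and]
    constructor
    · rintro ⟨x, hx, rfl⟩; exact hx
    · intro hy; exact ⟨τ.symm y, by simpa using hy, by simp⟩
  conv_rhs => rw [← himg]
  rw [Finset.card_image_of_injective _ τ.injective]

theorem stmt_9 (N : ℕ) (X₁ X₂ : Finset (Fin N)) (π π' : Equiv.Perm (Fin N)) :
    (∃ ω σ : Equiv.Perm (Fin N),
        X₂.image ω = X₂ ∧ X₁.image σ = X₁ ∧ π' = ω * π * σ) ↔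
      (X₁.filter fun i => π' i ∈ X₂).card = (X₁.filter fun i => π i ∈ X₂).card := by
  constructor
  · rintro ⟨ω, σ, hω, hσ, rfl⟩
    apply Finset.card_bij (fun x _ => σ x)
    · intro a ha
      simp only [Finset.mem_filter, Equiv.Perm.mul_apply] at ha ⊢
      exact ⟨(stmt9_mem_iff σ X₁ hσ a).2 (Finset.mem_filter.1 ha).1, (stmt9_mem_iff ω X₂ hω (π (σ a))).1 (Finset.mem_filter.1 ha).2⟩
    · intro a _ b _ hab
      exact σ.injective hab
    · intro b hb
      simp only [Finset.mem_filter, Equiv.Perm.mul_apply] at hb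
      refine ⟨σ.symm b, ?_, by simp⟩
      simp only [Finset.mem_filter, Equiv.Perm.mul_apply]
      refine Finset.mem_filter.2 ⟨?_, ?_⟩
      · rw [← stmt9_mem_iff σ X₁ hσ]; simpa using hb.1
      · rw [Equiv.apply_symm_apply]
        exact (stmt9_mem_iff ω X₂ hω _).2 hb.2
  · intro hc
    -- counting setup
    set f : Fin N → Bool × Bool := fun x => (decide (x ∈ X₁), decide (π x ∈ X₂)) with hf
    set g : Fin N → Bool × Bool := fun x => (decide (x ∈ X₁), decide (π' x ∈ X₂)) with hg
    have key : ∀ τ : Equiv.Perm (Fin N),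
        ∀ b1 b2 : Bool,
        (Finset.univ.filter fun x =>
            ((decide (x ∈ X₁), decide (τ x ∈ X₂)) : Bool × Bool) = (b1, b2)).card
        = (Finset.univ.filter fun x =>
            (b1 = true ↔ x ∈ X₁) ∧ (b2 = true ↔ τ x ∈ X₂)).card := by
      intro τ b1 b2
      congr 1
      ext x
      simp only [Finset.mem_filter, Finset.mem_univ, true_and, Prod.mk.injEq]
      cases b1 <;> cases b2 <;> simp [decide_eq_true_eq, decide_eq_false_iff_not]
    -- abbreviations for the four counts
    have habcd : ∀ τ : Equiv.Perm (Fin N),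
        (Finset.univ.filter fun x => (x ∈ X₁ ∧ τ x ∈ X₂)).card
          = (X₁.filter fun i => τ i ∈ X₂).card ∧
        (Finset.univ.filter fun x => (x ∈ X₁ ∧ τ x ∈ X₂)).card
          + (Finset.univ.filter fun x => (x ∈ X₁ ∧ ¬ τ x ∈ X₂)).card = X₁.card ∧
        (Finset.univ.filter fun x => (x ∈ X₁ ∧ τ x ∈ X₂)).card
          + (Finset.univ.filter fun x => (¬ x ∈ X₁ ∧ τ x ∈ X₂)).card = X₂.card ∧
        (Finset.univ.filter fun x => (x ∈ X₁ ∧ τ x ∈ X₂)).card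
          + (Finset.univ.filter fun x => (x ∈ X₁ ∧ ¬ τ x ∈ X₂)).card
          + (Finset.univ.filter fun x => (¬ x ∈ X₁ ∧ τ x ∈ X₂)).card
          + (Finset.univ.filter fun x => (¬ x ∈ X₁ ∧ ¬ τ x ∈ X₂)).card = N := by
      intro τ
      have e1 : (Finset.univ.filter fun x => (x ∈ X₁ ∧ τ x ∈ X₂))
          = X₁.filter fun i => τ i ∈ X₂ := by ext x; simp
      have e2 : (Finset.univ.filter fun x => (x ∈ X₁ ∧ ¬ τ x ∈ X₂))
          = X₁.filter fun i => ¬ τ i ∈ X₂ := by ext x; simp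
      have s1 := Finset.card_filter_add_card_filter_not
        (s := X₁) (p := fun i => τ i ∈ X₂)
      have e3 : (Finset.univ.filter fun x => (¬ x ∈ X₁ ∧ τ x ∈ X₂))
          = (Finset.univ.filter fun x => τ x ∈ X₂).filter fun i => ¬ i ∈ X₁ := by
        ext x; simp; tauto
      have e4 : (Finset.univ.filter fun x => (x ∈ X₁ ∧ τ x ∈ X₂))
          = (Finset.univ.filter fun x => τ x ∈ X₂).filter fun i => i ∈ X₁ := by
        ext x; simp; tauto
      have s2 := Finset.card_filter_add_card_filter_not
        (s := Finset.univ.filter fun x => τ x ∈ X₂) (p := fun i => i ∈ X₁)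
      have hpre := stmt9_card_preimage X₂ τ
      have e5 : (Finset.univ.filter fun x => (¬ x ∈ X₁ ∧ ¬ τ x ∈ X₂))
          = (Finset.univ.filter fun x => ¬ τ x ∈ X₂).filter fun i => ¬ i ∈ X₁ := by
        ext x; simp; tauto
      have e6 : (Finset.univ.filter fun x => (x ∈ X₁ ∧ ¬ τ x ∈ X₂))
          = (Finset.univ.filter fun x => ¬ τ x ∈ X₂).filter fun i => i ∈ X₁ := by
        ext x; simp; tauto
      have s3 := Finset.card_filter_add_card_filter_not
        (s := Finset.univ.filter fun x => ¬ τ x ∈ X₂) (p := fun i => i ∈ X₁)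
      have s4 := Finset.card_filter_add_card_filter_not
        (s := (Finset.univ : Finset (Fin N))) (p := fun x => τ x ∈ X₂)
      have hN : (Finset.univ : Finset (Fin N)).card = N := by simp
      refine ⟨e1 ▸ rfl, ?_, ?_, ?_⟩
      · rw [e1, e2]; exact s1
      · rw [e4, e3, s2, hpre]
      · rw [e4, e3, e5, e6]; omega
    obtain ⟨a1, a2, a3, a4⟩ := habcd π
    obtain ⟨b1, b2, b3, b4⟩ := habcd π'
    obtain ⟨σ, hfg⟩ := stmt9_exists_perm_comp f g (by
      rintro ⟨c1, c2⟩
      cases c1 <;> cases c2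
      · rw [show (Finset.univ.filter fun x => f x = (false, false))
              = Finset.univ.filter (fun x => ¬ x ∈ X₁ ∧ ¬ π x ∈ X₂) from by
            ext x; simp [hf, Prod.ext_iff, decide_eq_false_iff_not],
          show (Finset.univ.filter fun x => g x = (false, false))
              = Finset.univ.filter (fun x => ¬ x ∈ X₁ ∧ ¬ π' x ∈ X₂) from by
            ext x; simp [hg, Prod.ext_iff, decide_eq_false_iff_not]]
        omega
      · rw [show (Finset.univ.filter fun x => f x = (false, true))
              = Finset.univ.filter (fun x => ¬ x ∈ X₁ ∧ π x ∈ X₂) from by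
            ext x; simp [hf, Prod.ext_iff, decide_eq_false_iff_not],
          show (Finset.univ.filter fun x => g x = (false, true))
              = Finset.univ.filter (fun x => ¬ x ∈ X₁ ∧ π' x ∈ X₂) from by
            ext x; simp [hg, Prod.ext_iff, decide_eq_false_iff_not]]
        omega
      · rw [show (Finset.univ.filter fun x => f x = (true, false))
              = Finset.univ.filter (fun x => x ∈ X₁ ∧ ¬ π x ∈ X₂) from by
            ext x; simp [hf, Prod.ext_iff, decide_eq_false_iff_not],
          show (Finset.univ.filter fun x => g x = (true, false))
              = Finset.univ.filter (fun x => x ∈ X₁ ∧ ¬ π' x ∈ X₂) from by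
            ext x; simp [hg, Prod.ext_iff, decide_eq_false_iff_not]]
        omega
      · rw [show (Finset.univ.filter fun x => f x = (true, true))
              = Finset.univ.filter (fun x => x ∈ X₁ ∧ π x ∈ X₂) from by
            ext x; simp [hf, Prod.ext_iff],
          show (Finset.univ.filter fun x => g x = (true, true))
              = Finset.univ.filter (fun x => x ∈ X₁ ∧ π' x ∈ X₂) from by
            ext x; simp [hg, Prod.ext_iff]]
        omega)
    have hσ1 : ∀ x, (σ x ∈ X₁ ↔ x ∈ X₁) ∧ (π (σ x) ∈ X₂ ↔ π' x ∈ X₂) := by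
      intro x
      have h := hfg x
      rw [hf, hg] at h
      simpa only [Prod.mk.injEq, decide_eq_decide] using h
    refine ⟨π' * σ⁻¹ * π⁻¹, σ, ?_, ?_, by group⟩
    · apply stmt9_image_eq
      intro y
      have h := (hσ1 (σ.symm (π.symm y))).2
      simp only [Equiv.apply_symm_apply] at h
      simpa [Equiv.Perm.mul_apply] using h.symm
    · exact stmt9_image_eq σ X₁ (fun x => (hσ1 x).1)
end

section
/- Let N ∈ ℕ, X₁, X₂ ⊆ Fin N, κ ∈ ℕ, and let S_N^κ be the set of permutations of Fin N with exactly κ X-pairs. Fix any π ∈ S_N^κ. If ω is drawn uniformly from G₁ = {σ : σ(X₂) = X₂} and σ is drawn uniformly and independently from G₂ = {σ : σ(X₁) = X₁}, then ω ∘ π ∘ σ is uniformly distributed on S_N^κ. -/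
open Finset

section Helpers

variable {N : ℕ}

private lemma perm_mem_iff (e : Equiv.Perm (Fin N)) {S : Finset (Fin N)}
    (h : S.image e = S) (x : Fin N) : e x ∈ S ↔ x ∈ S := by
  constructor
  · intro hx
    rw [← h] at hx
    obtain ⟨y, hy, hxy⟩ := Finset.mem_image.1 hx
    rwa [← e.injective hxy]
  · intro hx
    rw [← h]
    exact Finset.mem_image_of_mem _ hx

private lemma image_eq_of_mem_iff (e : Equiv.Perm (Fin N)) {S : Finset (Fin N)}
    (h : ∀ x, e x ∈ S ↔ x ∈ S) : S.image e = S := by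
  ext y
  simp only [Finset.mem_image]
  constructor
  · rintro ⟨x, hx, rfl⟩
    exact (h x).2 hx
  · intro hy
    exact ⟨e⁻¹ y, by rw [← h, Equiv.Perm.coe_inv, Equiv.apply_symm_apply]; exact hy, Equiv.apply_symm_apply e y⟩

private lemma image_mul {a b : Equiv.Perm (Fin N)} {S : Finset (Fin N)}
    (ha : S.image a = S) (hb : S.image b = S) : S.image ⇑(a * b) = S := by
  refine image_eq_of_mem_iff _ fun x => ?_
  rw [Equiv.Perm.mul_apply, perm_mem_iff a ha, perm_mem_iff b hb]

private lemma image_inv {a : Equiv.Perm (Fin N)} {S : Finset (Fin N)}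
    (ha : S.image a = S) : S.image ⇑a⁻¹ = S := by
  refine image_eq_of_mem_iff _ fun x => ?_
  have h := perm_mem_iff a ha (a⁻¹ x)
  rw [Equiv.Perm.coe_inv, Equiv.apply_symm_apply] at h
  exact h.symm

private lemma exists_perm {α β : Type*} [Fintype α] [DecidableEq α] [DecidableEq β]
    (f g : α → β)
    (h : ∀ b, Fintype.card {a // f a = b} = Fintype.card {a // g a = b}) :
    ∃ e : Equiv.Perm α, ∀ x, g (e x) = f x := by
  classical
  refine ⟨(Equiv.sigmaFiberEquiv f).symm.trans
    ((Equiv.sigmaCongrRight fun b => Fintype.equivOfCardEq (h b)).trans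
      (Equiv.sigmaFiberEquiv g)), fun x => ?_⟩
  exact ((Fintype.equivOfCardEq (h (f x))) ⟨x, rfl⟩).2

/-- classification map -/
private def cl (X₁ X₂ : Finset (Fin N)) (τ : Equiv.Perm (Fin N)) (x : Fin N) : Bool × Bool :=
  (decide (x ∈ X₁), decide (τ x ∈ X₂))

private lemma fiber_split (X₁ X₂ : Finset (Fin N)) (τ : Equiv.Perm (Fin N)) (b : Bool) :
    (univ.filter fun x => cl X₁ X₂ τ x = (b, true)).card +
      (univ.filter fun x => cl X₁ X₂ τ x = (b, false)).card =
    (univ.filter fun x : Fin N => decide (x ∈ X₁) = b).card := by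
  classical
  have := Finset.card_filter_add_card_filter_not
    (s := univ.filter fun x : Fin N => decide (x ∈ X₁) = b)
    (p := fun x => decide (τ x ∈ X₂) = true)
  rw [Finset.filter_filter, Finset.filter_filter] at this
  convert this using 3 <;> ext x <;> simp [cl, Prod.ext_iff, and_comm]

private lemma fiber_split₂ (X₁ X₂ : Finset (Fin N)) (τ : Equiv.Perm (Fin N)) :
    (univ.filter fun x => cl X₁ X₂ τ x = (true, true)).card +
      (univ.filter fun x => cl X₁ X₂ τ x = (false, true)).card = X₂.card := by
  classical
  have key : (univ.filter fun x : Fin N => τ x ∈ X₂).card = X₂.card := by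
    have : (univ.filter fun x : Fin N => τ x ∈ X₂) = X₂.image ⇑τ⁻¹ := by
      ext x
      simp only [Finset.mem_filter, Finset.mem_univ, true_and, Finset.mem_image]
      constructor
      · intro hx
        exact ⟨τ x, hx, Equiv.symm_apply_apply τ x⟩
      · rintro ⟨y, hy, rfl⟩
        rwa [Equiv.Perm.coe_inv, Equiv.apply_symm_apply]
    rw [this, Finset.card_image_of_injective _ (τ⁻¹).injective]
  have := Finset.card_filter_add_card_filter_not
    (s := univ.filter fun x : Fin N => τ x ∈ X₂)
    (p := fun x => decide (x ∈ X₁) = true)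
  rw [Finset.filter_filter, Finset.filter_filter, key] at this
  convert this using 3 <;> ext x <;> simp [cl, Prod.ext_iff, and_comm]

private lemma fiber_tt (X₁ X₂ : Finset (Fin N)) (τ : Equiv.Perm (Fin N)) :
    (univ.filter fun x => cl X₁ X₂ τ x = (true, true)).card =
      (X₁.filter fun i => τ i ∈ X₂).card := by
  congr 1
  ext x
  simp [cl, Prod.ext_iff]

private lemma fiber_card_eq (X₁ X₂ : Finset (Fin N)) (κ : ℕ)
    (τ τ' : Equiv.Perm (Fin N))
    (hτ : (X₁.filter fun i => τ i ∈ X₂).card = κ)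
    (hτ' : (X₁.filter fun i => τ' i ∈ X₂).card = κ)
    (y : Bool × Bool) :
    (univ.filter fun x => cl X₁ X₂ τ x = y).card =
    (univ.filter fun x => cl X₁ X₂ τ' x = y).card := by
  have htt : (univ.filter fun x => cl X₁ X₂ τ x = (true, true)).card =
      (univ.filter fun x => cl X₁ X₂ τ' x = (true, true)).card := by
    rw [fiber_tt, fiber_tt, hτ, hτ']
  have hft : (univ.filter fun x => cl X₁ X₂ τ x = (false, true)).card =
      (univ.filter fun x => cl X₁ X₂ τ' x = (false, true)).card := by
    have h1 := fiber_split₂ X₁ X₂ τ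
    have h2 := fiber_split₂ X₁ X₂ τ'
    rw [htt] at h1
    omega
  have htf : (univ.filter fun x => cl X₁ X₂ τ x = (true, false)).card =
      (univ.filter fun x => cl X₁ X₂ τ' x = (true, false)).card := by
    have h1 := fiber_split X₁ X₂ τ true
    have h2 := fiber_split X₁ X₂ τ' true
    rw [htt] at h1
    omega
  have hff : (univ.filter fun x => cl X₁ X₂ τ x = (false, false)).card =
      (univ.filter fun x => cl X₁ X₂ τ' x = (false, false)).card := by
    have h1 := fiber_split X₁ X₂ τ false
    have h2 := fiber_split X₁ X₂ τ' false
    rw [hft] at h1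
    omega
  obtain ⟨b, c⟩ := y
  cases b <;> cases c <;> assumption

/-- Transitivity: the group G₁ × G₂ acts transitively on S_N^κ. -/
private lemma transitivity (X₁ X₂ : Finset (Fin N)) (κ : ℕ)
    (τ τ' : Equiv.Perm (Fin N))
    (hτ : (X₁.filter fun i => τ i ∈ X₂).card = κ)
    (hτ' : (X₁.filter fun i => τ' i ∈ X₂).card = κ) :
    ∃ ω σ : Equiv.Perm (Fin N),
      X₂.image ω = X₂ ∧ X₁.image σ = X₁ ∧ ω * τ * σ = τ' := by
  classical
  obtain ⟨e, he⟩ := exists_perm (cl X₁ X₂ τ) (cl X₁ X₂ τ') (fun y => by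
    rw [Fintype.card_subtype, Fintype.card_subtype]
    exact fiber_card_eq X₁ X₂ κ τ τ' hτ hτ' y)
  have he1 : ∀ x, e x ∈ X₁ ↔ x ∈ X₁ := by
    intro x
    have := congrArg Prod.fst (he x)
    simpa [cl] using this
  have he2 : ∀ x, τ' (e x) ∈ X₂ ↔ τ x ∈ X₂ := by
    intro x
    have := congrArg Prod.snd (he x)
    simpa [cl] using this
  refine ⟨τ' * e * τ⁻¹, e⁻¹, ?_, image_inv (image_eq_of_mem_iff e he1), ?_⟩
  · refine image_eq_of_mem_iff _ fun x => ?_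
    calc (τ' * e * τ⁻¹) x ∈ X₂ ↔ τ' (e (τ⁻¹ x)) ∈ X₂ := Iff.rfl
      _ ↔ τ (τ⁻¹ x) ∈ X₂ := he2 _
      _ ↔ x ∈ X₂ := by rw [Equiv.Perm.coe_inv, Equiv.apply_symm_apply]
  · group

end Helpers

theorem stmt_10 (N κ : ℕ) (X₁ X₂ : Finset (Fin N)) (π : Equiv.Perm (Fin N))
    (hπ : (X₁.filter fun i => π i ∈ X₂).card = κ)
    (τ : Equiv.Perm (Fin N)) (hτ : (X₁.filter fun i => τ i ∈ X₂).card = κ) :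
    (((Finset.univ.filter fun ω : Equiv.Perm (Fin N) => X₂.image ω = X₂) ×ˢ
        (Finset.univ.filter fun σ : Equiv.Perm (Fin N) => X₁.image σ = X₁)).filter
          (fun p => p.1 * π * p.2 = τ)).card *
      (Finset.univ.filter fun τ' : Equiv.Perm (Fin N) =>
        (X₁.filter fun i => τ' i ∈ X₂).card = κ).card =
    (Finset.univ.filter fun ω : Equiv.Perm (Fin N) => X₂.image ω = X₂).card *
      (Finset.univ.filter fun σ : Equiv.Perm (Fin N) => X₁.image σ = X₁).card := by
  classical
  set G₁ := Finset.univ.filter fun ω : Equiv.Perm (Fin N) => X₂.image ω = X₂ with hG₁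
  set G₂ := Finset.univ.filter fun σ : Equiv.Perm (Fin N) => X₁.image σ = X₁ with hG₂
  set Sκ := Finset.univ.filter fun τ' : Equiv.Perm (Fin N) =>
      (X₁.filter fun i => τ' i ∈ X₂).card = κ with hSκ
  -- every ω π σ has exactly κ X-pairs
  have fact1 : ∀ p ∈ G₁ ×ˢ G₂, p.1 * π * p.2 ∈ Sκ := by
    rintro ⟨ω, σ⟩ hp
    rw [Finset.mem_product, hG₁, hG₂, Finset.mem_filter, Finset.mem_filter] at hp
    obtain ⟨⟨-, hω⟩, -, hσ⟩ := hp
    rw [hSκ, Finset.mem_filter]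
    refine ⟨Finset.mem_univ _, ?_⟩
    rw [← hπ]
    refine Finset.card_bij (fun a _ => σ a) ?_ ?_ ?_
    · intro a ha
      rw [Finset.mem_filter] at ha ⊢
      obtain ⟨ha1, ha2⟩ := ha
      refine ⟨(perm_mem_iff σ hσ a).2 ha1, ?_⟩
      have : ω (π (σ a)) ∈ X₂ := ha2
      rwa [perm_mem_iff ω hω] at this
    · intro a _ b _ hab
      exact σ.injective hab
    · intro b hb
      rw [Finset.mem_filter] at hb
      refine ⟨σ⁻¹ b, ?_, Equiv.apply_symm_apply σ b⟩
      rw [Finset.mem_filter]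
      constructor
      · rw [← perm_mem_iff σ hσ, Equiv.Perm.coe_inv, Equiv.apply_symm_apply]; exact hb.1
      · show ω (π (σ (σ⁻¹ b))) ∈ X₂
        rw [Equiv.Perm.coe_inv, Equiv.apply_symm_apply, perm_mem_iff ω hω]
        exact hb.2
  have hsum : (G₁ ×ˢ G₂).card =
      ∑ t ∈ Sκ, ((G₁ ×ˢ G₂).filter fun p => p.1 * π * p.2 = t).card :=
    Finset.card_eq_sum_card_fiberwise fact1
  have hfib : ∀ t ∈ Sκ, ((G₁ ×ˢ G₂).filter fun p => p.1 * π * p.2 = t).card =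
      ((G₁ ×ˢ G₂).filter fun p => p.1 * π * p.2 = τ).card := by
    intro t ht
    rw [hSκ, Finset.mem_filter] at ht
    obtain ⟨ω₀, σ₀, hω₀, hσ₀, heq⟩ := transitivity X₁ X₂ κ τ t hτ ht.2
    refine Finset.card_nbij' (i := fun p => (ω₀⁻¹ * p.1, p.2 * σ₀⁻¹))
      (j := fun p => (ω₀ * p.1, p.2 * σ₀)) ?_ ?_ ?_ ?_
    · rintro ⟨ω, σ⟩ hp
      simp only [Finset.mem_coe, Finset.mem_filter, Finset.mem_product, Finset.mem_univ, true_and,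
        hG₁, hG₂] at hp ⊢
      obtain ⟨⟨hω, hσ⟩, hmul⟩ := hp
      refine ⟨⟨image_mul (image_inv hω₀) hω, image_mul hσ (image_inv hσ₀)⟩, ?_⟩
      have key : ω₀⁻¹ * ω * π * (σ * σ₀⁻¹) = ω₀⁻¹ * (ω * π * σ) * σ₀⁻¹ := by group
      show ω₀⁻¹ * ω * π * (σ * σ₀⁻¹) = τ
      rw [key, hmul, ← heq]
      group
    · rintro ⟨ω, σ⟩ hp
      simp only [Finset.mem_coe, Finset.mem_filter, Finset.mem_product, Finset.mem_univ, true_and,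
        hG₁, hG₂] at hp ⊢
      obtain ⟨⟨hω, hσ⟩, hmul⟩ := hp
      refine ⟨⟨image_mul hω₀ hω, image_mul hσ hσ₀⟩, ?_⟩
      have key : ω₀ * ω * π * (σ * σ₀) = ω₀ * (ω * π * σ) * σ₀ := by group
      show ω₀ * ω * π * (σ * σ₀) = t
      rw [key, hmul, heq]
    · rintro ⟨ω, σ⟩ _
      simp only [Prod.mk.injEq]
      constructor <;> group
    · rintro ⟨ω, σ⟩ _
      simp only [Prod.mk.injEq]
      constructor <;> group
  rw [Finset.sum_congr rfl hfib, Finset.sum_const, smul_eq_mul] at hsum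
  have hcp : #(G₁ ×ˢ G₂) = #G₁ * #G₂ := Finset.card_product G₁ G₂
  rw [← hcp, hsum]
  exact Nat.mul_comm _ _
end

section
/- Let N ∈ ℕ and X₁, X₂ ⊆ Fin N with X₁, X₂ nonempty. For any real u ≥ 6·|X₁||X₂|/N, the probability over a uniformly random permutation π that |X_π| ≥ |X₁||X₂|/N + u is at most exp(-3u/4). -/
open scoped Classical

open Finset

lemma card_fixing (N : ℕ) (S : Finset (Fin N)) :
    (Finset.univ.filter (fun σ : Equiv.Perm (Fin N) => ∀ i ∈ S, σ i = i)).card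
      = (N - S.card).factorial := by
  classical
  rw [← Fintype.card_subtype]
  have e1 : {σ : Equiv.Perm (Fin N) // ∀ i ∈ S, σ i = i}
      ≃ { f : Equiv.Perm (Fin N) // ∀ a, ¬(a ∉ S) → f a = a } :=
    Equiv.subtypeEquivRight (by intro f; simp [not_not])
  have e2 := (Equiv.Perm.subtypeEquivSubtypePerm (fun x : Fin N => x ∉ S)).symm
  have e3 := e1.trans e2
  rw [Fintype.card_congr e3, Fintype.card_perm, Fintype.card_subtype_compl,
    Fintype.card_fin, Fintype.card_coe]

lemma count_good (N k : ℕ) (S X₂ : Finset (Fin N)) (hS : S.card = k) :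
    (Finset.univ.filter (fun π : Equiv.Perm (Fin N) => ∀ i ∈ S, π i ∈ X₂)).card
      ≤ X₂.card.descFactorial k * (N - k).factorial := by
  classical
  set s := Finset.univ.filter (fun π : Equiv.Perm (Fin N) => ∀ i ∈ S, π i ∈ X₂) with hs
  set res : Equiv.Perm (Fin N) → (↥S ↪ Fin N) :=
    fun π => ⟨fun i => π i.1, fun i j h => Subtype.ext (π.injective h)⟩ with hres
  set t : Finset (↥S ↪ Fin N) :=
    Finset.univ.filter (fun f : ↥S ↪ Fin N => ∀ i, f i ∈ X₂) with ht
  have Hmaps : ∀ π ∈ s, res π ∈ t := by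
    intro π hπ
    rw [hs, mem_filter] at hπ
    rw [ht, mem_filter]
    exact ⟨mem_univ _, fun i => hπ.2 i.1 i.2⟩
  have Hfib : ∀ f₀ ∈ t, (s.filter (fun π => res π = f₀)).card ≤ (N - k).factorial := by
    intro f₀ _
    rcases (s.filter (fun π => res π = f₀)).eq_empty_or_nonempty with he | ⟨π₀, hπ₀⟩
    · simp [he]
    · have hπ₀' : res π₀ = f₀ := (mem_filter.mp hπ₀).2
      have key : (s.filter (fun π => res π = f₀)).card ≤
          (Finset.univ.filter (fun σ : Equiv.Perm (Fin N) => ∀ i ∈ S, σ i = i)).card := by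
        apply Finset.card_le_card_of_injOn (fun π => π₀⁻¹ * π)
        · intro π hπ
          have hπ' : res π = f₀ := (mem_filter.mp hπ).2
          rw [Finset.mem_coe, mem_filter]
          refine ⟨mem_univ _, fun i hi => ?_⟩
          have h1 : π i = f₀ ⟨i, hi⟩ := DFunLike.congr_fun hπ' ⟨i, hi⟩
          have h2 : π₀ i = f₀ ⟨i, hi⟩ := DFunLike.congr_fun hπ₀' ⟨i, hi⟩
          simp only [Equiv.Perm.mul_apply, h1, ← h2, Equiv.Perm.coe_inv, Equiv.symm_apply_apply]
        · intro x _ y _ hxy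
          exact mul_left_cancel hxy
      rwa [card_fixing, hS] at key
  have H := Finset.card_le_mul_card_image_of_maps_to Hmaps ((N - k).factorial) Hfib
  have Htc : t.card ≤ X₂.card.descFactorial k := by
    rw [ht, ← Fintype.card_subtype]
    calc Fintype.card {f : ↥S ↪ Fin N // ∀ i, f i ∈ X₂}
        ≤ Fintype.card (↥S ↪ ↥X₂) :=
          Fintype.card_le_of_injective
            (fun f => ⟨fun i => ⟨f.1 i, f.2 i⟩,
              fun i j h => f.1.injective (congrArg Subtype.val h)⟩)
            (by
              intro f g h
              apply Subtype.ext; apply DFunLike.ext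
              intro i
              exact congrArg Subtype.val (DFunLike.congr_fun h i))
      _ = X₂.card.descFactorial k := by
          rw [Fintype.card_embedding_eq, Fintype.card_coe, Fintype.card_coe, hS]
  calc s.card ≤ (N - k).factorial * t.card := H
    _ ≤ (N - k).factorial * X₂.card.descFactorial k :=
        Nat.mul_le_mul_left _ Htc
    _ = X₂.card.descFactorial k * (N - k).factorial := Nat.mul_comm _ _

set_option maxHeartbeats 1000000 in
theorem stmt_13 (N : ℕ) (X₁ X₂ : Finset (Fin N)) (h₁ : X₁.Nonempty) (h₂ : X₂.Nonempty)
    (u : ℝ) (hu : 6 * ((X₁.card : ℝ) * X₂.card / N) ≤ u) :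
    ((Finset.univ.filter (fun π : Equiv.Perm (Fin N) =>
        (X₁.card : ℝ) * X₂.card / N + u ≤ (X₁.filter fun i => π i ∈ X₂).card)).card : ℝ) /
        Nat.factorial N ≤ Real.exp (-(3 / 4) * u) := by
  classical
  obtain ⟨i0, hi0⟩ := id h₁
  have hN : 0 < N := i0.pos
  have hNR : (0:ℝ) < N := by exact_mod_cast hN
  set a := X₁.card with ha
  set b := X₂.card with hb
  have haR : (1:ℝ) ≤ a := by exact_mod_cast h₁.card_pos
  have hbR : (1:ℝ) ≤ b := by exact_mod_cast h₂.card_pos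
  set m : ℝ := (a:ℝ) * b / N with hm
  have hm0 : 0 < m := by
    apply div_pos _ hNR
    nlinarith
  have hu0 : 0 < u := lt_of_lt_of_le (by linarith) hu
  set k := ⌈m + u⌉₊ with hk
  have hk1 : 1 ≤ k := Nat.one_le_ceil_iff.mpr (by linarith)
  have hkmu : m + u ≤ k := Nat.le_ceil _
  have hkR1 : (1:ℝ) ≤ k := by exact_mod_cast hk1
  set bad := Finset.univ.filter (fun π : Equiv.Perm (Fin N) =>
      m + u ≤ ((X₁.filter fun i => π i ∈ X₂).card : ℝ)) with hbad
  set g : Finset (Fin N) → Finset (Equiv.Perm (Fin N)) :=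
    fun S => Finset.univ.filter (fun π : Equiv.Perm (Fin N) => ∀ i ∈ S, π i ∈ X₂) with hg
  have hsub : bad ⊆ (X₁.powersetCard k).biUnion g := by
    intro π hπ
    rw [hbad, mem_filter] at hπ
    have hcard : k ≤ (X₁.filter fun i => π i ∈ X₂).card := by
      rw [hk]; exact Nat.ceil_le.mpr hπ.2
    obtain ⟨S, hSsub, hScard⟩ := Finset.exists_subset_card_eq hcard
    rw [mem_biUnion]
    refine ⟨S, ?_, ?_⟩
    · rw [mem_powersetCard]; exact ⟨hSsub.trans (filter_subset _ _), hScard⟩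
    · rw [hg, mem_filter]; exact ⟨mem_univ _, fun i hi => (mem_filter.mp (hSsub hi)).2⟩
  have hcount : bad.card ≤ a.choose k * (b.descFactorial k * (N - k).factorial) := by
    calc bad.card ≤ ((X₁.powersetCard k).biUnion g).card := card_le_card hsub
      _ ≤ ∑ S ∈ X₁.powersetCard k, (g S).card := card_biUnion_le
      _ ≤ ∑ _S ∈ X₁.powersetCard k, b.descFactorial k * (N - k).factorial :=
          Finset.sum_le_sum (fun S hS =>
            count_good N k S X₂ (mem_powersetCard.mp hS).2)
      _ = (X₁.powersetCard k).card * (b.descFactorial k * (N - k).factorial) := by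
          rw [Finset.sum_const, smul_eq_mul]
      _ = a.choose k * (b.descFactorial k * (N - k).factorial) := by
          rw [Finset.card_powersetCard]
  clear_value bad g k m a b
  by_cases hka : k ≤ a
  · by_cases hkb : k ≤ b
    · -- main case
      have haN : a ≤ N := by rw [ha]; exact le_trans (Finset.card_le_univ X₁) (le_of_eq (Fintype.card_fin N))
      have hkN : k ≤ N := hka.trans haN
      have hkaR : (k:ℝ) ≤ a := by exact_mod_cast hka
      have hkbR : (k:ℝ) ≤ b := by exact_mod_cast hkb
      have h7m : 7 * m ≤ k := by linarith
      have hmN : m * N = (a:ℝ) * b := by rw [hm]; field_simp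
      have h7ab : 7 * ((a:ℝ) * b) ≤ k * N := by
        have h1 : (7 * m) * N ≤ (k:ℝ) * N := mul_le_mul_of_nonneg_right h7m hNR.le
        nlinarith
      have h7a : 7 * (a:ℝ) ≤ N := by nlinarith
      have h7k : 7 * (k:ℝ) ≤ N := by linarith
      set C : ℝ := (N:ℝ) - k with hC
      have hC6 : 6 * (N:ℝ) / 7 ≤ C := by rw [hC]; linarith
      have hC0 : 0 < C := by rw [hC]; linarith
      clear_value C
      -- the descFactorial lower bound
      have hdescN : C ^ k ≤ (N.descFactorial k : ℝ) := by
        have h1 : (N - k) ^ k ≤ N.descFactorial k := by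
          calc (N - k) ^ k ≤ (N + 1 - k) ^ k :=
                Nat.pow_le_pow_left (by omega) k
            _ ≤ N.descFactorial k := Nat.pow_sub_le_descFactorial N k
        have h2 : ((N - k : ℕ) : ℝ) = C := by
          rw [hC, Nat.cast_sub hkN]
        calc C ^ k = ((N - k : ℕ) : ℝ) ^ k := by rw [h2]
          _ ≤ (N.descFactorial k : ℝ) := by exact_mod_cast h1
      have hdescN0 : (0:ℝ) < (N.descFactorial k : ℝ) :=
        lt_of_lt_of_le (pow_pos hC0 k) hdescN
      have hfactN0 : (0:ℝ) < (N.factorial : ℝ) := by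
        exact_mod_cast N.factorial_pos
      -- step 1
      have hPle : (bad.card : ℝ) / N.factorial
          ≤ (a.choose k : ℝ) * (b.descFactorial k : ℝ) / (N.descFactorial k : ℝ) := by
        rw [div_le_div_iff₀ hfactN0 hdescN0]
        have hfid : ((N - k).factorial : ℝ) * (N.descFactorial k : ℝ) = (N.factorial : ℝ) := by
          exact_mod_cast Nat.factorial_mul_descFactorial hkN
        have hcR : (bad.card : ℝ) ≤ (a.choose k : ℝ) * ((b.descFactorial k : ℝ) * ((N - k).factorial : ℝ)) := by
          exact_mod_cast hcount
        calc (bad.card : ℝ) * (N.descFactorial k : ℝ)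
            ≤ ((a.choose k : ℝ) * ((b.descFactorial k : ℝ) * ((N - k).factorial : ℝ))) * (N.descFactorial k : ℝ) :=
              mul_le_mul_of_nonneg_right hcR hdescN0.le
          _ = (a.choose k : ℝ) * (b.descFactorial k : ℝ) * (((N - k).factorial : ℝ) * (N.descFactorial k : ℝ)) := by ring
          _ = (a.choose k : ℝ) * (b.descFactorial k : ℝ) * (N.factorial : ℝ) := by rw [hfid]
      -- choose bound
      have hkfact0 : (0:ℝ) < (k.factorial : ℝ) := by exact_mod_cast k.factorial_pos
      have hchoose1 : (a.choose k : ℝ) ≤ (a:ℝ) ^ k / (k.factorial : ℝ) := by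
        rw [le_div_iff₀ hkfact0]
        have h1 : k.factorial * a.choose k ≤ a ^ k := by
          rw [← Nat.descFactorial_eq_factorial_mul_choose]
          exact Nat.descFactorial_le_pow a k
        calc (a.choose k : ℝ) * (k.factorial : ℝ) = ((k.factorial * a.choose k : ℕ) : ℝ) := by
              push_cast; ring
          _ ≤ ((a ^ k : ℕ) : ℝ) := by exact_mod_cast h1
          _ = (a:ℝ) ^ k := by push_cast; ring
      have hfk : ((k:ℝ)) ^ k ≤ Real.exp 1 ^ k * (k.factorial : ℝ) := by
        have hsum := Real.sum_le_exp_of_nonneg (Nat.cast_nonneg k) (k + 1)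
        have hsingle := Finset.single_le_sum
          (f := fun i => (k:ℝ) ^ i / (i.factorial : ℝ))
          (fun i _ => div_nonneg (pow_nonneg (Nat.cast_nonneg k) _) (Nat.cast_nonneg _))
          (Finset.self_mem_range_succ k)
        have h1 : (k:ℝ) ^ k / (k.factorial : ℝ) ≤ Real.exp k := le_trans hsingle hsum
        have h2 : Real.exp (k : ℝ) = Real.exp 1 ^ k := by
          rw [← Real.exp_nat_mul]; norm_num
        rw [div_le_iff₀ hkfact0, h2] at h1
        exact h1
      have hchoose : (a.choose k : ℝ) ≤ (a:ℝ) ^ k * Real.exp 1 ^ k / ((k:ℝ)) ^ k := by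
        have hkk0 : (0:ℝ) < (k:ℝ) ^ k := by positivity
        rw [le_div_iff₀ hkk0]
        calc (a.choose k : ℝ) * (k:ℝ) ^ k
            ≤ ((a:ℝ) ^ k / (k.factorial : ℝ)) * (Real.exp 1 ^ k * (k.factorial : ℝ)) :=
              mul_le_mul hchoose1 hfk (by positivity) (by positivity)
          _ = (a:ℝ) ^ k * Real.exp 1 ^ k * ((k.factorial : ℝ) / (k.factorial : ℝ)) := by ring
          _ = (a:ℝ) ^ k * Real.exp 1 ^ k := by rw [div_self hkfact0.ne']; ring
      have hdescb : (b.descFactorial k : ℝ) ≤ (b:ℝ) ^ k := by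
        exact_mod_cast Nat.descFactorial_le_pow b k
      -- step 2
      have hstep2 : (a.choose k : ℝ) * (b.descFactorial k : ℝ) / (N.descFactorial k : ℝ)
          ≤ ((a:ℝ) * b * Real.exp 1 / ((k:ℝ) * C)) ^ k := by
        have heq : ((a:ℝ) * b * Real.exp 1 / ((k:ℝ) * C)) ^ k
            = ((a:ℝ) ^ k * Real.exp 1 ^ k / ((k:ℝ)) ^ k) * (b:ℝ) ^ k / C ^ k := by
          rw [div_pow, mul_pow, mul_pow, mul_pow]
          ring
        rw [heq]
        apply div_le_div₀ (by positivity) _ (by positivity) hdescN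
        exact mul_le_mul hchoose hdescb (by positivity) (by positivity)
      -- base bound
      have hbase : (a:ℝ) * b * Real.exp 1 / ((k:ℝ) * C) ≤ Real.exp (-(3/4)) := by
        have hkC0 : (0:ℝ) < (k:ℝ) * C := by positivity
        have h6ab : 6 * ((a:ℝ) * b) ≤ (k:ℝ) * C := by
          have h1 : (k:ℝ) * (6 * N / 7) ≤ (k:ℝ) * C :=
            mul_le_mul_of_nonneg_left hC6 (by positivity)
          nlinarith
        have h1 : (a:ℝ) * b * Real.exp 1 / ((k:ℝ) * C) ≤ Real.exp 1 / 6 := by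
          rw [div_le_div_iff₀ hkC0 (by norm_num : (0:ℝ) < 6)]
          nlinarith [Real.exp_pos 1]
        have hexp74 : Real.exp (7/4) ≤ 6 := by
          have h4 : Real.exp (7/4) ^ (4:ℕ) = Real.exp 7 := by
            rw [← Real.exp_nat_mul]; norm_num
          have h7 : Real.exp 7 ≤ 1296 := by
            have he : Real.exp 7 = Real.exp 1 ^ (7:ℕ) := by
              rw [← Real.exp_nat_mul]; norm_num
            rw [he]
            calc Real.exp 1 ^ 7 ≤ 2.7182818286 ^ 7 :=
                  pow_le_pow_left₀ (Real.exp_pos 1).le Real.exp_one_lt_d9.le 7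
              _ ≤ 1296 := by norm_num
          nlinarith [Real.exp_pos (7/4), sq_nonneg (Real.exp (7/4) - 6),
            sq_nonneg (Real.exp (7/4) + 6), sq_nonneg (Real.exp (7/4) ^ 2 - 36)]
        have h2 : Real.exp 1 / 6 ≤ Real.exp (-(3/4)) := by
          have he : Real.exp (-(3/4)) = Real.exp 1 / Real.exp (7/4) := by
            rw [← Real.exp_sub]; norm_num
          rw [he]
          exact div_le_div_of_nonneg_left (Real.exp_pos 1).le (Real.exp_pos (7/4)) hexp74
        linarith
      -- conclude
      calc (bad.card : ℝ) / (N.factorial : ℝ)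
          ≤ (a.choose k : ℝ) * (b.descFactorial k : ℝ) / (N.descFactorial k : ℝ) := hPle
        _ ≤ ((a:ℝ) * b * Real.exp 1 / ((k:ℝ) * C)) ^ k := hstep2
        _ ≤ Real.exp (-(3/4)) ^ k := pow_le_pow_left₀ (by positivity) hbase k
        _ = Real.exp ((k:ℝ) * (-(3/4))) := (Real.exp_nat_mul _ k).symm
        _ ≤ Real.exp (-(3/4) * u) := Real.exp_le_exp.mpr (by nlinarith)
    · -- k > b : descFactorial vanishes
      have hz : b.descFactorial k = 0 :=
        Nat.descFactorial_eq_zero_iff_lt.mpr (by omega)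
      have h0 : bad.card = 0 := by
        have := hcount
        rw [hz] at this
        simpa using this
      rw [h0]
      simp only [Nat.cast_zero, zero_div]
      exact (Real.exp_pos _).le
  · -- k > a : choose vanishes
    have hz : a.choose k = 0 := Nat.choose_eq_zero_of_lt (by omega)
    have h0 : bad.card = 0 := by
      have := hcount
      rw [hz] at this
      simpa using this
    rw [h0]
    simp only [Nat.cast_zero, zero_div]
    exact (Real.exp_pos _).le
end

section
/- Let N ∈ ℕ and X₁, X₂ ⊆ Fin N nonempty, and let D_X be the distribution on S_N with Pr[π] = |X_π| / ∑_{σ ∈ S_N} |X_σ|. Then the expected number of X-pairs under D_X equals E_{σ~uniform}[|X_σ|²] / E_{σ~uniform}[|X_σ|], and satisfies 1 ≤ E_{π~D_X}[|X_π|] ≤ 1 + |X₁||X₂|/N. -/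
open Finset


lemma perm_fiber_card {N : ℕ} (i k : Fin N) :
    (Finset.univ.filter fun σ : Equiv.Perm (Fin N) => σ i = k).card = (N - 1).factorial := by
  have hN : 0 < N := i.pos
  have heq : ∀ k' : Fin N,
      (Finset.univ.filter fun σ : Equiv.Perm (Fin N) => σ i = k').card
        = (Finset.univ.filter fun σ : Equiv.Perm (Fin N) => σ i = k).card := by
    intro k'
    apply Finset.card_bij' (fun σ _ => Equiv.swap k' k * σ) (fun σ _ => Equiv.swap k' k * σ)
    · intro σ hσ
      simp only [Finset.mem_filter, Finset.mem_univ, true_and] at hσ ⊢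
      simp [Equiv.Perm.mul_apply, hσ]
    · intro σ hσ
      simp only [Finset.mem_filter, Finset.mem_univ, true_and] at hσ ⊢
      simp [Equiv.Perm.mul_apply, hσ]
    · intro σ _
      rw [← mul_assoc, Equiv.swap_mul_self, one_mul]
    · intro σ _
      rw [← mul_assoc, Equiv.swap_mul_self, one_mul]
  have hsum : ∑ k' : Fin N, (Finset.univ.filter fun σ : Equiv.Perm (Fin N) => σ i = k').card
      = N.factorial := by
    have := Finset.card_eq_sum_card_fiberwise
      (f := fun σ : Equiv.Perm (Fin N) => σ i) (s := Finset.univ) (t := Finset.univ)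
      (fun σ _ => Finset.mem_univ _)
    rw [← this, Finset.card_univ, Fintype.card_perm, Fintype.card_fin]
  obtain ⟨m, rfl⟩ : ∃ m, N = m + 1 := ⟨N - 1, (Nat.succ_pred_eq_of_pos hN).symm⟩
  have : (m + 1) * (Finset.univ.filter fun σ : Equiv.Perm (Fin (m+1)) => σ i = k).card
      = (m + 1) * m.factorial := by
    rw [← Nat.factorial_succ, ← hsum]
    simp [heq, Finset.sum_const, Finset.card_univ, mul_comm]
  simpa using Nat.eq_of_mul_eq_mul_left (Nat.succ_pos m) this

lemma perm_fiber2_card {N : ℕ} {i j k l : Fin N} (hij : i ≠ j) (hkl : k ≠ l) :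
    (Finset.univ.filter fun σ : Equiv.Perm (Fin N) => σ i = k ∧ σ j = l).card
      = (N - 2).factorial := by
  classical
  -- sum over l' of fibers equals the single fiber card for i
  have hsum : ∑ l' : Fin N,
      (Finset.univ.filter fun σ : Equiv.Perm (Fin N) => σ i = k ∧ σ j = l').card
      = (N - 1).factorial := by
    have h1 := Finset.card_eq_sum_card_fiberwise
      (f := fun σ : Equiv.Perm (Fin N) => σ j)
      (s := Finset.univ.filter fun σ : Equiv.Perm (Fin N) => σ i = k)
      (t := Finset.univ) (fun σ _ => Finset.mem_univ _)
    simp only [Finset.filter_filter] at h1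
    rw [← h1, perm_fiber_card i k]
  have hk0 : (Finset.univ.filter fun σ : Equiv.Perm (Fin N) => σ i = k ∧ σ j = k).card = 0 := by
    rw [Finset.card_eq_zero, Finset.filter_eq_empty_iff]
    rintro σ - ⟨h1, h2⟩
    exact hij (σ.injective (h1.trans h2.symm))
  have heq : ∀ l' l'' : Fin N, l' ≠ k → l'' ≠ k →
      (Finset.univ.filter fun σ : Equiv.Perm (Fin N) => σ i = k ∧ σ j = l').card
        = (Finset.univ.filter fun σ : Equiv.Perm (Fin N) => σ i = k ∧ σ j = l'').card := by
    intro l' l'' h' h''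
    apply Finset.card_bij' (fun σ _ => Equiv.swap l' l'' * σ) (fun σ _ => Equiv.swap l' l'' * σ)
    · intro σ hσ
      simp only [Finset.mem_filter, Finset.mem_univ, true_and] at hσ ⊢
      obtain ⟨h1, h2⟩ := hσ
      constructor
      · rw [Equiv.Perm.mul_apply, h1, Equiv.swap_apply_of_ne_of_ne (Ne.symm h') (Ne.symm h'')]
      · rw [Equiv.Perm.mul_apply, h2, Equiv.swap_apply_left]
    · intro σ hσ
      simp only [Finset.mem_filter, Finset.mem_univ, true_and] at hσ ⊢
      obtain ⟨h1, h2⟩ := hσ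
      constructor
      · rw [Equiv.Perm.mul_apply, h1, Equiv.swap_apply_of_ne_of_ne (Ne.symm h') (Ne.symm h'')]
      · rw [Equiv.Perm.mul_apply, h2, Equiv.swap_apply_right]
    · intro σ _; rw [← mul_assoc, Equiv.swap_mul_self, one_mul]
    · intro σ _; rw [← mul_assoc, Equiv.swap_mul_self, one_mul]
  have hN2 : 2 ≤ N := by
    have := Fintype.card_fin N ▸ Fintype.one_lt_card_iff_nontrivial.mpr ⟨⟨k, l, hkl⟩⟩
    omega
  obtain ⟨m, rfl⟩ : ∃ m, N = m + 2 := ⟨N - 2, by omega⟩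
  -- rewrite sum using erase k
  have hsum2 : ∑ l' : Fin (m+2),
      (Finset.univ.filter fun σ : Equiv.Perm (Fin (m+2)) => σ i = k ∧ σ j = l').card
      = (m + 1) * (Finset.univ.filter
          fun σ : Equiv.Perm (Fin (m+2)) => σ i = k ∧ σ j = l).card := by
    rw [← Finset.add_sum_erase _ _ (Finset.mem_univ k), hk0, zero_add]
    rw [Finset.sum_congr rfl (fun l' hl' => heq l' l (Finset.ne_of_mem_erase hl') (Ne.symm hkl))]
    rw [Finset.sum_const, Finset.card_erase_of_mem (Finset.mem_univ k), Finset.card_univ,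
      Fintype.card_fin, smul_eq_mul]
    norm_num
  have : (m + 1) * (Finset.univ.filter
      fun σ : Equiv.Perm (Fin (m+2)) => σ i = k ∧ σ j = l).card = (m + 1) * m.factorial := by
    rw [← hsum2, hsum]
    simp [Nat.factorial_succ]
  simpa using Nat.eq_of_mul_eq_mul_left (Nat.succ_pos m) this

lemma single_fiber_card {N : ℕ} (i : Fin N) (X₂ : Finset (Fin N)) :
    (Finset.univ.filter fun σ : Equiv.Perm (Fin N) => σ i ∈ X₂).card
      = X₂.card * (N - 1).factorial := by
  classical
  have h1 := Finset.card_eq_sum_card_fiberwise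
    (f := fun σ : Equiv.Perm (Fin N) => σ i)
    (s := Finset.univ.filter fun σ : Equiv.Perm (Fin N) => σ i ∈ X₂)
    (t := X₂) (fun σ hσ => (Finset.mem_filter.mp hσ).2)
  rw [h1]
  rw [Finset.sum_congr rfl (fun k hk => ?_), Finset.sum_const, smul_eq_mul]
  simp only [Finset.filter_filter]
  rw [Finset.filter_congr (fun σ _ => (show (σ i ∈ X₂ ∧ σ i = k) ↔ σ i = k from
    ⟨fun h => h.2, fun h => ⟨h ▸ hk, h⟩⟩)), perm_fiber_card i k]

lemma pair_fiber_card {N : ℕ} {i j : Fin N} (hij : i ≠ j) (X₂ : Finset (Fin N)) :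
    (Finset.univ.filter fun σ : Equiv.Perm (Fin N) => σ i ∈ X₂ ∧ σ j ∈ X₂).card
      = X₂.offDiag.card * (N - 2).factorial := by
  classical
  have h1 := Finset.card_eq_sum_card_fiberwise
    (f := fun σ : Equiv.Perm (Fin N) => (σ i, σ j))
    (s := Finset.univ.filter fun σ : Equiv.Perm (Fin N) => σ i ∈ X₂ ∧ σ j ∈ X₂)
    (t := X₂ ×ˢ X₂) (fun σ hσ => by
      simp only [Finset.mem_coe, Finset.mem_filter, Finset.mem_univ, true_and] at hσ
      exact Finset.mk_mem_product hσ.1 hσ.2)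
  rw [h1]
  have hterm : ∀ p ∈ X₂ ×ˢ X₂,
      (((Finset.univ.filter fun σ : Equiv.Perm (Fin N) => σ i ∈ X₂ ∧ σ j ∈ X₂)).filter
        (fun σ => (σ i, σ j) = p)).card = if p.1 = p.2 then 0 else (N - 2).factorial := by
    intro p hp
    rw [Finset.mem_product] at hp
    simp only [Finset.filter_filter]
    rw [Finset.filter_congr (fun σ _ => (show ((σ i ∈ X₂ ∧ σ j ∈ X₂) ∧ (σ i, σ j) = p)
        ↔ (σ i = p.1 ∧ σ j = p.2) from by
      constructor
      · rintro ⟨-, h⟩; exact ⟨congrArg Prod.fst h, congrArg Prod.snd h⟩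
      · rintro ⟨h1, h2⟩; exact ⟨⟨h1 ▸ hp.1, h2 ▸ hp.2⟩, by rw [h1, h2]⟩))]
    split
    · next heq =>
      rw [Finset.card_eq_zero, Finset.filter_eq_empty_iff]
      rintro σ - ⟨e1, e2⟩
      exact hij (σ.injective (by rw [e1, e2, heq]))
    · next hne => exact perm_fiber2_card hij hne
  rw [Finset.sum_congr rfl hterm, Finset.sum_ite, Finset.sum_const_zero, zero_add,
    Finset.sum_const, smul_eq_mul]
  have hod : (X₂ ×ˢ X₂).filter (fun p => ¬ p.1 = p.2) = X₂.offDiag := by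
    ext p; simp [Finset.mem_offDiag, and_assoc]
  rw [hod]

lemma sum_cX {N : ℕ} (X₁ X₂ : Finset (Fin N)) :
    ∑ σ : Equiv.Perm (Fin N), (X₁.filter fun i => σ i ∈ X₂).card
      = X₁.card * (X₂.card * (N - 1).factorial) := by
  classical
  simp only [Finset.card_filter]
  rw [Finset.sum_comm]
  rw [Finset.sum_congr rfl (fun i _ => ?_), Finset.sum_const, smul_eq_mul]
  rw [← Finset.card_filter, single_fiber_card]

lemma sum_cX_sq {N : ℕ} (X₁ X₂ : Finset (Fin N)) :
    ∑ σ : Equiv.Perm (Fin N), (X₁.filter fun i => σ i ∈ X₂).card ^ 2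
      = X₁.card * (X₂.card * (N - 1).factorial)
        + X₁.offDiag.card * (X₂.offDiag.card * (N - 2).factorial) := by
  classical
  have expand : ∀ σ : Equiv.Perm (Fin N), (X₁.filter fun i => σ i ∈ X₂).card ^ 2
      = ∑ p ∈ X₁ ×ˢ X₁,
          (if σ p.1 ∈ X₂ then 1 else 0) * (if σ p.2 ∈ X₂ then 1 else 0) := by
    intro σ
    rw [sq, Finset.card_filter, Finset.sum_mul_sum, Finset.sum_product]
  rw [Finset.sum_congr rfl (fun σ _ => expand σ), Finset.sum_comm]
  rw [← Finset.diag_union_offDiag X₁, Finset.sum_union (Finset.disjoint_diag_offDiag X₁)]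
  congr 1
  · rw [Finset.sum_congr rfl (fun p hp => ?_), Finset.sum_const, smul_eq_mul, Finset.diag_card]
    obtain ⟨hp1, hpe⟩ := Finset.mem_diag.mp hp
    have hsimp : ∀ σ : Equiv.Perm (Fin N),
        (if σ p.1 ∈ X₂ then 1 else 0) * (if σ p.2 ∈ X₂ then 1 else 0)
          = if σ p.1 ∈ X₂ then 1 else 0 := by
      intro σ; rw [← hpe]; split <;> simp
    rw [Finset.sum_congr rfl fun σ _ => hsimp σ, ← Finset.card_filter, single_fiber_card]
  · rw [Finset.sum_congr rfl (fun p hp => ?_), Finset.sum_const, smul_eq_mul]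
    obtain ⟨h1, h2, hne⟩ := Finset.mem_offDiag.mp hp
    have hsimp : ∀ σ : Equiv.Perm (Fin N),
        (if σ p.1 ∈ X₂ then 1 else 0) * (if σ p.2 ∈ X₂ then 1 else 0)
          = if σ p.1 ∈ X₂ ∧ σ p.2 ∈ X₂ then 1 else 0 := by
      intro σ; by_cases hA : σ p.1 ∈ X₂ <;> by_cases hB : σ p.2 ∈ X₂ <;> simp [hA, hB]
    rw [Finset.sum_congr rfl fun σ _ => hsimp σ, ← Finset.card_filter, pair_fiber_card hne]

theorem stmt_14 (N : ℕ) (X₁ X₂ : Finset (Fin N)) (h₁ : X₁.Nonempty) (h₂ : X₂.Nonempty)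
    (E : ℝ)
    (hE : E = ∑ π : Equiv.Perm (Fin N),
        (((X₁.filter fun i => π i ∈ X₂).card : ℝ) /
            ∑ σ : Equiv.Perm (Fin N), ((X₁.filter fun i => σ i ∈ X₂).card : ℝ)) *
          (X₁.filter fun i => π i ∈ X₂).card) :
    E = ((∑ σ : Equiv.Perm (Fin N), ((X₁.filter fun i => σ i ∈ X₂).card : ℝ) ^ 2) /
            Nat.factorial N) /
          ((∑ σ : Equiv.Perm (Fin N), ((X₁.filter fun i => σ i ∈ X₂).card : ℝ)) /
            Nat.factorial N) ∧
    1 ≤ E ∧ E ≤ 1 + (X₁.card : ℝ) * X₂.card / N := by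
  classical
  obtain ⟨i₀, hi₀⟩ := h₁
  have hN : 0 < N := i₀.pos
  have ha1 : 1 ≤ X₁.card := Finset.card_pos.mpr ⟨i₀, hi₀⟩
  have hb1 : 1 ≤ X₂.card := Finset.card_pos.mpr h₂
  have haN : X₁.card ≤ N := by simpa using Finset.card_le_univ X₁
  have hbN : X₂.card ≤ N := by simpa using Finset.card_le_univ X₂
  have hS := sum_cX X₁ X₂
  have hQ := sum_cX_sq X₁ X₂
  -- real/nat casts
  have hSr : (∑ σ : Equiv.Perm (Fin N), ((X₁.filter fun i => σ i ∈ X₂).card : ℝ))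
      = ((∑ σ : Equiv.Perm (Fin N), (X₁.filter fun i => σ i ∈ X₂).card : ℕ) : ℝ) := by
    push_cast; rfl
  have hQr : (∑ σ : Equiv.Perm (Fin N), ((X₁.filter fun i => σ i ∈ X₂).card : ℝ) ^ 2)
      = ((∑ σ : Equiv.Perm (Fin N), (X₁.filter fun i => σ i ∈ X₂).card ^ 2 : ℕ) : ℝ) := by
    push_cast; rfl
  have hSnatpos : 0 < ∑ σ : Equiv.Perm (Fin N), (X₁.filter fun i => σ i ∈ X₂).card := by
    rw [hS]; positivity
  have hSpos : 0 < ∑ σ : Equiv.Perm (Fin N), ((X₁.filter fun i => σ i ∈ X₂).card : ℝ) := by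
    rw [hSr]; exact_mod_cast hSnatpos
  have hSQnat : (∑ σ : Equiv.Perm (Fin N), (X₁.filter fun i => σ i ∈ X₂).card)
      ≤ ∑ σ : Equiv.Perm (Fin N), (X₁.filter fun i => σ i ∈ X₂).card ^ 2 :=
    Finset.sum_le_sum fun σ _ => Nat.le_self_pow two_ne_zero _
  have hEQ : E = (∑ σ : Equiv.Perm (Fin N), ((X₁.filter fun i => σ i ∈ X₂).card : ℝ) ^ 2)
      / (∑ σ : Equiv.Perm (Fin N), ((X₁.filter fun i => σ i ∈ X₂).card : ℝ)) := by
    rw [hE, Finset.sum_congr rfl (fun π _ => by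
      rw [div_mul_eq_mul_div, ← sq]), ← Finset.sum_div]
  -- the key nat inequality for the upper bound
  have hnat : (∑ σ : Equiv.Perm (Fin N), (X₁.filter fun i => σ i ∈ X₂).card ^ 2) * N
      ≤ (N + X₁.card * X₂.card) * ∑ σ : Equiv.Perm (Fin N), (X₁.filter fun i => σ i ∈ X₂).card := by
    rw [hS, hQ, Finset.offDiag_card, Finset.offDiag_card]
    obtain ⟨a', ha'⟩ : ∃ a', X₁.card = a' + 1 := ⟨X₁.card - 1, by omega⟩
    obtain ⟨b', hb'⟩ : ∃ b', X₂.card = b' + 1 := ⟨X₂.card - 1, by omega⟩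
    have hsub : ∀ n : ℕ, (n + 1) * (n + 1) - (n + 1) = n * (n + 1) := fun n => by
      rw [Nat.succ_mul, Nat.add_sub_cancel]
    rw [ha', hb', hsub, hsub]
    rcases N with _ | _ | m
    · omega
    · have hA : a' = 0 := by omega
      have hB : b' = 0 := by omega
      subst hA hB; norm_num
    · have ha'm : a' ≤ m + 1 := by omega
      have hb'm : b' ≤ m + 1 := by omega
      have hfac1 : (m + 2 - 1).factorial = (m + 1) * m.factorial := by
        simp [Nat.factorial_succ]
      have hfac2 : (m + 2 - 2).factorial = m.factorial := by norm_num
      rw [hfac1, hfac2]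
      have hcore : a' * b' * (m + 2) ≤ (a' + 1) * (b' + 1) * (m + 1) := by
        nlinarith [Nat.mul_le_mul_right b' ha'm]
      calc ((a' + 1) * ((b' + 1) * ((m + 1) * m.factorial))
              + a' * (a' + 1) * (b' * (b' + 1) * m.factorial)) * (m + 2)
          = (a' + 1) * ((b' + 1) * ((m + 1) * m.factorial)) * (m + 2)
              + (a' * b' * (m + 2)) * ((a' + 1) * (b' + 1) * m.factorial) := by ring
        _ ≤ (a' + 1) * ((b' + 1) * ((m + 1) * m.factorial)) * (m + 2)
              + ((a' + 1) * (b' + 1) * (m + 1)) * ((a' + 1) * (b' + 1) * m.factorial) :=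
            Nat.add_le_add_left (Nat.mul_le_mul_right _ hcore) _
        _ = ((m + 2) + (a' + 1) * (b' + 1))
              * ((a' + 1) * ((b' + 1) * ((m + 2 - 1).factorial))) := by rw [hfac1]; ring
  have hFne : ((N.factorial : ℝ)) ≠ 0 := Nat.cast_ne_zero.mpr N.factorial_ne_zero
  have hNr : (0 : ℝ) < N := Nat.cast_pos.mpr hN
  refine ⟨?_, ?_, ?_⟩
  · rw [hEQ, div_div_div_eq, mul_comm, mul_div_mul_left _ _ hFne]
  · rw [hEQ, le_div_iff₀ hSpos, one_mul, hSr, hQr]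
    exact_mod_cast hSQnat
  · rw [hEQ]
    have hrhs : 1 + (X₁.card : ℝ) * X₂.card / N = ((N : ℝ) + X₁.card * X₂.card) / N := by
      field_simp
    rw [hrhs, div_le_div_iff₀ hSpos hNr, hSr, hQr]
    exact_mod_cast hnat
end
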